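/- For n, m, ℓ ∈ ℕ with ℓ + m ≤ n, the (m+1) × (m+1) determinant whose (i, j)-entry (0-indexed, i from top, j from left) is binom(n + m − i, ℓ + m − j) equals ∏_{j=0}^{m} binom(n+m, ℓ+j) / ∏_{j=0}^{m} binom(n+m, j). -/

import Mathlib

open Finset Polynomial

private lemma factQ_ne (k : ℕ) : ((k.factorial : ℕ) : ℚ) ≠ 0 := by
  exact_mod_cast k.factorial_ne_zero

/-- Binomial Hankel determinant: det(binom(n+m-i, ℓ+m-j))_{0 ≤ i,j ≤ m}
= ∏_{j=0}^m binom(n+m, ℓ+j) / ∏_{j=0}^m binom(n+m, j), for ℓ + m ≤ n. -/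
theorem binomial_hankel_det (n m ℓ : ℕ) (h : ℓ + m ≤ n) :
    Matrix.det (fun i j : Fin (m + 1) =>
        (((n + m - (i : ℕ)).choose (ℓ + m - (j : ℕ)) : ℕ) : ℚ))
    = (∏ j ∈ Finset.range (m + 1), (((n + m).choose (ℓ + j) : ℕ) : ℚ)) /
        (∏ j ∈ Finset.range (m + 1), (((n + m).choose j : ℕ) : ℚ)) := by
  set c := n - ℓ with hc
  -- Step 1: reverse rows and columns
  have h1 : (fun i j : Fin (m + 1) =>
        (((n + m - (i : ℕ)).choose (ℓ + m - (j : ℕ)) : ℕ) : ℚ))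
      = Matrix.submatrix
          (Matrix.of fun i j : Fin (m + 1) => (((n + (i : ℕ)).choose (ℓ + (j : ℕ)) : ℕ) : ℚ))
          Fin.revPerm Fin.revPerm := by
    ext i j
    have hi : (i : ℕ) ≤ m := Fin.is_le i
    have hj : (j : ℕ) ≤ m := Fin.is_le j
    simp only [Matrix.submatrix_apply, Matrix.of_apply, Fin.revPerm_apply, Fin.val_rev]
    congr 2 <;> omega
  rw [h1, Matrix.det_submatrix_equiv_self]
  -- Step 2: entrywise factorization
  have hentry : ∀ i j : Fin (m + 1),
      (((n + (i : ℕ)).choose (ℓ + (j : ℕ)) : ℕ) : ℚ)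
      = (((n + (i : ℕ)).factorial : ℚ) / ((c + (i : ℕ)).factorial : ℚ)) *
        ((1 / ((ℓ + (j : ℕ)).factorial : ℚ)) *
          ((Nat.descFactorial (c + (i : ℕ)) (j : ℕ) : ℕ) : ℚ)) := by
    intro i j
    have hj : (j : ℕ) ≤ m := Fin.is_le j
    have hle : ℓ + (j : ℕ) ≤ n + (i : ℕ) := by omega
    rw [Nat.cast_choose ℚ hle,
      show (n + (i : ℕ)) - (ℓ + (j : ℕ)) = (c + (i : ℕ)) - (j : ℕ) by omega]
    have h3 : ((c + (i : ℕ)) - (j : ℕ)).factorial *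
        Nat.descFactorial (c + (i : ℕ)) (j : ℕ) = (c + (i : ℕ)).factorial :=
      Nat.factorial_mul_descFactorial (by omega)
    rw [← h3]
    push_cast
    have e1 := factQ_ne ((c + (i : ℕ)) - (j : ℕ))
    have e2 := factQ_ne (ℓ + (j : ℕ))
    have e3 : ((Nat.descFactorial (c + (i : ℕ)) (j : ℕ) : ℕ) : ℚ) ≠ 0 := by
      have : Nat.descFactorial (c + (i : ℕ)) (j : ℕ) ≠ 0 := fun h0 =>
        absurd (Nat.descFactorial_eq_zero_iff_lt.mp h0) (by omega)
      exact_mod_cast this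
    push_cast at e1
    field_simp
  have h2 : (Matrix.of fun i j : Fin (m + 1) => (((n + (i : ℕ)).choose (ℓ + (j : ℕ)) : ℕ) : ℚ))
      = Matrix.of fun i j : Fin (m + 1) =>
          (((n + (i : ℕ)).factorial : ℚ) / ((c + (i : ℕ)).factorial : ℚ)) *
          (Matrix.of fun i j : Fin (m + 1) =>
            ((1 / ((ℓ + (j : ℕ)).factorial : ℚ)) *
              ((Nat.descFactorial (c + (i : ℕ)) (j : ℕ) : ℕ) : ℚ))) i j := by
    ext i j; exact hentry i j
  rw [h2, Matrix.det_mul_column, Matrix.det_mul_row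
    (fun j : Fin (m + 1) => 1 / ((ℓ + (j : ℕ)).factorial : ℚ))
    (fun i j : Fin (m + 1) => ((Nat.descFactorial (c + (i : ℕ)) (j : ℕ) : ℕ) : ℚ))]
  -- Step 3: the descFactorial determinant is the superfactorial
  have hD : Matrix.det (fun i j : Fin (m + 1) =>
        ((Nat.descFactorial (c + (i : ℕ)) (j : ℕ) : ℕ) : ℚ))
      = (Nat.superFactorial m : ℚ) := by
    have hpoly : (fun i j : Fin (m + 1) =>
          ((Nat.descFactorial (c + (i : ℕ)) (j : ℕ) : ℕ) : ℚ))
        = Matrix.of fun i j : Fin (m + 1) =>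
            (descPochhammer ℚ (j : ℕ)).eval (((c + (i : ℕ) : ℕ)) : ℚ) := by
      ext i j
      rw [Matrix.of_apply, descPochhammer_eval_eq_descFactorial]
    rw [hpoly, ← Matrix.det_eval_matrixOfPolynomials_eq_det_vandermonde
        (fun i : Fin (m + 1) => ((c + (i : ℕ) : ℕ) : ℚ))
        (fun j => descPochhammer ℚ (j : ℕ))
        (fun j => descPochhammer_natDegree ℚ _)
        (fun j => monic_descPochhammer ℚ _)]
    have hv : (fun i : Fin (m + 1) => ((c + (i : ℕ) : ℕ) : ℚ))
        = fun i : Fin (m + 1) => ((i : ℕ) : ℚ) + (c : ℚ) := by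
      ext i; push_cast; ring
    rw [hv, Matrix.det_vandermonde_add, Matrix.det_vandermonde_id_eq_superFactorial]
  rw [hD]
  -- Step 4: final product algebra
  have hsf : (Nat.superFactorial m : ℚ) = ∏ j ∈ range (m + 1), ((j.factorial : ℕ) : ℚ) := by
    rw [← Nat.prod_range_succ_factorial m]; push_cast; rfl
  rw [hsf,
    Fin.prod_univ_eq_prod_range
      (fun i => ((n + i).factorial : ℚ) / ((c + i).factorial : ℚ)) (m + 1),
    Fin.prod_univ_eq_prod_range
      (fun i => (1 : ℚ) / ((ℓ + i).factorial : ℚ)) (m + 1)]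
  have hrefl : (∏ i ∈ range (m + 1),
        ((n + i).factorial : ℚ) / ((c + i).factorial : ℚ))
      = ∏ i ∈ range (m + 1),
        ((n + (m - i)).factorial : ℚ) / ((c + (m - i)).factorial : ℚ) := by
    rw [show (fun i => ((n + (m - i)).factorial : ℚ) / ((c + (m - i)).factorial : ℚ))
        = fun i => ((n + ((m + 1) - 1 - i)).factorial : ℚ) /
            ((c + ((m + 1) - 1 - i)).factorial : ℚ) from rfl,
      Finset.prod_range_reflect
        (fun i => ((n + i).factorial : ℚ) / ((c + i).factorial : ℚ)) (m + 1)]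
  rw [hrefl]
  have hch1 : ∏ j ∈ range (m + 1), (((n + m).choose (ℓ + j) : ℕ) : ℚ)
      = ∏ j ∈ range (m + 1),
        (((n + m).factorial : ℚ) / (((ℓ + j).factorial : ℚ) * ((c + (m - j)).factorial : ℚ))) := by
    refine Finset.prod_congr rfl fun j hj => ?_
    have hjm : j ≤ m := by simpa [Nat.lt_succ_iff] using hj
    rw [Nat.cast_choose ℚ (by omega : ℓ + j ≤ n + m),
      show (n + m) - (ℓ + j) = c + (m - j) by omega]
  have hch2 : ∏ j ∈ range (m + 1), (((n + m).choose j : ℕ) : ℚ)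
      = ∏ j ∈ range (m + 1),
        (((n + m).factorial : ℚ) / ((j.factorial : ℚ) * ((n + (m - j)).factorial : ℚ))) := by
    refine Finset.prod_congr rfl fun j hj => ?_
    have hjm : j ≤ m := by simpa [Nat.lt_succ_iff] using hj
    rw [Nat.cast_choose ℚ (by omega : j ≤ n + m),
      show (n + m) - j = n + (m - j) by omega]
  rw [hch1, hch2, ← Finset.prod_mul_distrib, ← Finset.prod_mul_distrib,
    ← Finset.prod_div_distrib]
  refine Finset.prod_congr rfl fun j hj => ?_
  have e1 := factQ_ne (n + (m - j))
  have e2 := factQ_ne (c + (m - j))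
  have e3 := factQ_ne (ℓ + j)
  have e4 := factQ_ne j
  have e5 := factQ_ne (n + m)
  push_cast at e1 e2 e3 e4 e5 ⊢
  field_simp
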